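/- Let K ≥ 1 and L ≥ 1 be fixed integers, ρ > 0, and for each k ∈ {1, …, K} let β_k > 0 and m_k > 0. For each N and each k, suppose μ_{k,N} and σ_{k,N}² ≥ 0 satisfy μ_{k,N}/((L/m_k) log N) → 1 and σ_{k,N}²/μ_{k,N}² → 0 as N → ∞, and let γ_{k,N} be the Gaussian measure on ℝ with mean μ_{k,N} and variance σ_{k,N}². Then Σ_{k=1}^K ∫ log₂(1 + ρ β_k |x|) dγ_{k,N}(x), divided by Σ_{k=1}^K log₂(1 + ρ β_k (L/m_k) log N), converges to 1 as N → ∞. -/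

import Mathlib

open MeasureTheory ProbabilityTheory Filter Real
open scoped ENNReal NNReal

variable {m : ℝ} {v : NNReal}

lemma gauss_integral_eq (hv : v ≠ 0) (g : ℝ → ℝ) :
    ∫ x, g x ∂(gaussianReal m v) = ∫ x, gaussianPDFReal m v x * g x := by
  rw [gaussianReal_of_var_ne_zero m hv]
  have h : gaussianPDF m v = fun x => ((gaussianPDFReal m v x).toNNReal : ℝ≥0∞) := rfl
  rw [h, integral_withDensity_eq_integral_smul
    (by exact (measurable_gaussianPDFReal m v).real_toNNReal)]
  congr 1; ext x
  simp [NNReal.smul_def, Real.coe_toNNReal _ (gaussianPDFReal_nonneg m v x)]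

lemma gauss_integrable_iff (hv : v ≠ 0) {g : ℝ → ℝ} :
    Integrable g (gaussianReal m v) ↔
      Integrable (fun x => gaussianPDFReal m v x * g x) volume := by
  rw [gaussianReal_of_var_ne_zero m hv]
  have h : gaussianPDF m v = fun x => ((gaussianPDFReal m v x).toNNReal : ℝ≥0∞) := rfl
  rw [h, integrable_withDensity_iff_integrable_smul
    (by exact (measurable_gaussianPDFReal m v).real_toNNReal)]
  constructor <;> intro hh <;> refine hh.congr (Filter.Eventually.of_forall fun x => ?_) <;>
    simp [NNReal.smul_def, Real.coe_toNNReal _ (gaussianPDFReal_nonneg m v x)]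

lemma gauss_integrable_sq (m : ℝ) (v : NNReal) :
    Integrable (fun x => (x - m)^2) (gaussianReal m v) := by
  rcases eq_or_ne v 0 with rfl | hv
  · simp only [gaussianReal_zero_var]
    exact (integrable_const ((m - m)^2)).congr (ae_eq_dirac (fun x => (x - m)^2)).symm
  · rw [gauss_integrable_iff hv]
    have hvpos : (0:ℝ) < v := by positivity
    have hdom : Integrable (fun x : ℝ =>
        (√(2 * π * v))⁻¹ * ((4*v) * Real.exp (-(1/(4*v)) * (x - m)^2))) volume := by
      exact (((integrable_exp_neg_mul_sq (by positivity : (0:ℝ) < 1/(4*v))).comp_sub_right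
        m).const_mul _).const_mul _
    refine hdom.mono (((measurable_gaussianPDFReal m v).mul (by fun_prop)).aestronglyMeasurable)
      (Filter.Eventually.of_forall fun x => ?_)
    have h1 : gaussianPDFReal m v x * (x - m)^2 ≤
        (√(2 * π * v))⁻¹ * ((4*v) * Real.exp (-(1/(4*v)) * (x - m)^2)) := by
      rw [gaussianPDFReal]
      rw [mul_assoc]
      refine mul_le_mul_of_nonneg_left ?_ (by positivity)
      set t := (x - m)^2 with ht
      have htn : 0 ≤ t := sq_nonneg _
      set r := Real.exp (-(1/(4*(v:ℝ)))*t) with hr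
      have hrn : 0 ≤ r := Real.exp_nonneg _
      have key : t ≤ 4*(v:ℝ) * Real.exp (t/(4*v)) := by
        have h2 : t/(4*(v:ℝ)) ≤ Real.exp (t/(4*v)) := by
          linarith [Real.add_one_le_exp (t/(4*(v:ℝ)))]
        calc t = (t/(4*(v:ℝ))) * (4*v) := by field_simp
        _ ≤ Real.exp (t/(4*v)) * (4*v) := mul_le_mul_of_nonneg_right h2 (by positivity)
        _ = 4*(v:ℝ)*Real.exp (t/(4*v)) := by ring
      have e1 : Real.exp (-t/(2*(v:ℝ))) = r * r := by
        rw [hr, ← Real.exp_add]; congr 1; field_simp; ring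
      have e2 : r * Real.exp (t/(4*(v:ℝ))) = 1 := by
        rw [hr, ← Real.exp_add, show (-(1/(4*(v:ℝ)))*t + t/(4*(v:ℝ))) = 0 by ring,
          Real.exp_zero]
      have e4 : r * r * (4 * (v:ℝ) * Real.exp (t/(4*(v:ℝ)))) = 4 * (v:ℝ) * r := by
        calc r * r * (4 * (v:ℝ) * Real.exp (t/(4*(v:ℝ))))
            = 4 * (v:ℝ) * r * (r * Real.exp (t/(4*(v:ℝ)))) := by ring
        _ = 4 * (v:ℝ) * r := by rw [e2, mul_one]
      rw [e1]
      have := mul_le_mul_of_nonneg_left key (mul_nonneg hrn hrn)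
      linarith
    have hn1 : 0 ≤ gaussianPDFReal m v x * (x - m)^2 :=
      mul_nonneg (gaussianPDFReal_nonneg m v x) (sq_nonneg _)
    rw [Real.norm_eq_abs, Real.norm_eq_abs, abs_of_nonneg hn1, abs_of_nonneg (by positivity)]
    exact h1

lemma gauss_sq_int_le (m : ℝ) (v : NNReal) :
    ∫ x, (x - m)^2 ∂(gaussianReal m v) ≤ 6 * v := by
  rcases eq_or_ne v 0 with rfl | hv
  · simp [gaussianReal_zero_var, integral_dirac]
  · have hvpos : (0:ℝ) < v := by positivity
    rw [gauss_integral_eq hv]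
    have hint : Integrable (fun x => gaussianPDFReal m v x * (x - m)^2) volume := by
      rw [← gauss_integrable_iff hv]; exact gauss_integrable_sq m v
    have hdom : Integrable (fun x : ℝ =>
        (√(2 * π * v))⁻¹ * ((4*v) * Real.exp (-(1/(4*v)) * (x - m)^2))) volume :=
      (((integrable_exp_neg_mul_sq (by positivity : (0:ℝ) < 1/(4*v))).comp_sub_right
        m).const_mul _).const_mul _
    have h1 : ∀ x, gaussianPDFReal m v x * (x - m)^2 ≤
        (√(2 * π * v))⁻¹ * ((4*v) * Real.exp (-(1/(4*v)) * (x - m)^2)) := by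
      intro x
      rw [gaussianPDFReal, mul_assoc]
      refine mul_le_mul_of_nonneg_left ?_ (by positivity)
      set t := (x - m)^2 with ht
      have htn : 0 ≤ t := sq_nonneg _
      set r := Real.exp (-(1/(4*(v:ℝ)))*t) with hr
      have hrn : 0 ≤ r := Real.exp_nonneg _
      have key : t ≤ 4*(v:ℝ) * Real.exp (t/(4*v)) := by
        have h2 : t/(4*(v:ℝ)) ≤ Real.exp (t/(4*v)) := by
          linarith [Real.add_one_le_exp (t/(4*(v:ℝ)))]
        calc t = (t/(4*(v:ℝ))) * (4*v) := by field_simp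
        _ ≤ Real.exp (t/(4*v)) * (4*v) := mul_le_mul_of_nonneg_right h2 (by positivity)
        _ = 4*(v:ℝ)*Real.exp (t/(4*v)) := by ring
      have e1 : Real.exp (-t/(2*(v:ℝ))) = r * r := by
        rw [hr, ← Real.exp_add]; congr 1; field_simp; ring
      have e2 : r * Real.exp (t/(4*(v:ℝ))) = 1 := by
        rw [hr, ← Real.exp_add, show (-(1/(4*(v:ℝ)))*t + t/(4*(v:ℝ))) = 0 by ring,
          Real.exp_zero]
      have e4 : r * r * (4 * (v:ℝ) * Real.exp (t/(4*(v:ℝ)))) = 4 * (v:ℝ) * r := by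
        calc r * r * (4 * (v:ℝ) * Real.exp (t/(4*(v:ℝ))))
            = 4 * (v:ℝ) * r * (r * Real.exp (t/(4*(v:ℝ)))) := by ring
        _ = 4 * (v:ℝ) * r := by rw [e2, mul_one]
      rw [e1]
      have := mul_le_mul_of_nonneg_left key (mul_nonneg hrn hrn)
      linarith
    have hle := integral_mono hint hdom h1
    refine hle.trans ?_
    rw [integral_const_mul, integral_const_mul]
    have hgauss : ∫ x : ℝ, Real.exp (-(1/(4*(v:ℝ))) * (x - m)^2) = √(π/(1/(4*(v:ℝ)))) := by
      rw [show (fun x : ℝ => Real.exp (-(1/(4*(v:ℝ))) * (x - m)^2))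
          = (fun x : ℝ => (fun y => Real.exp (-(1/(4*(v:ℝ))) * y^2)) (x - m)) from rfl,
        integral_sub_right_eq_self (fun y => Real.exp (-(1/(4*(v:ℝ))) * y^2)) m]
      exact integral_gaussian _
    rw [hgauss]
    have h2 : π/(1/(4*(v:ℝ))) = 2 * (2*π*v) := by field_simp; ring
    rw [h2, Real.sqrt_mul (by norm_num : (0:ℝ) ≤ 2)]
    have hs : (0:ℝ) < √(2*π*v) := Real.sqrt_pos.mpr (by positivity)
    rw [show (√(2*π*(v:ℝ)))⁻¹ * (4*(v:ℝ) * (√2 * √(2*π*v)))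
        = 4*(v:ℝ)*√2 * ((√(2*π*(v:ℝ)))⁻¹ * √(2*π*v)) by ring, inv_mul_cancel₀ hs.ne', mul_one]
    nlinarith [Real.sq_sqrt (show (0:ℝ) ≤ 2 by norm_num), Real.sqrt_nonneg 2, hvpos]

lemma gauss_markov (m : ℝ) (v : NNReal) {t : ℝ} (ht : 0 < t) :
    ((gaussianReal m v) {x | t ≤ |x - m|}).toReal ≤ 6 * v / t^2 := by
  have hsub : {x : ℝ | t ≤ |x - m|} ⊆ {x : ℝ | t^2 ≤ (x - m)^2} := by
    intro x hx
    simp only [Set.mem_setOf_eq] at hx ⊢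
    calc t^2 ≤ |x - m|^2 := pow_le_pow_left₀ ht.le hx 2
    _ = (x - m)^2 := sq_abs _
  have h1 : ((gaussianReal m v) {x | t ≤ |x - m|}).toReal ≤
      ((gaussianReal m v) {x | t^2 ≤ (x - m)^2}).toReal :=
    ENNReal.toReal_mono (measure_ne_top _ _) (measure_mono hsub)
  refine h1.trans ?_
  have h2 := mul_meas_ge_le_integral_of_nonneg
    (μ := gaussianReal m v) (f := fun x => (x - m)^2)
    (Filter.Eventually.of_forall fun x => sq_nonneg _) (gauss_integrable_sq m v) (t^2)
  have h3 := h2.trans (gauss_sq_int_le m v)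
  have ht2 : (0:ℝ) < t^2 := by positivity
  rw [le_div_iff₀ ht2]
  rw [measureReal_def] at h3
  nlinarith [h3]

lemma gauss_integrable_abs_sub (m : ℝ) (v : NNReal) :
    Integrable (fun x => |x - m|) (gaussianReal m v) := by
  refine Integrable.mono' (g := fun x => 1 + (x - m)^2)
    ((integrable_const (1:ℝ)).add (gauss_integrable_sq m v))
    ((measurable_id.sub_const m).abs).aestronglyMeasurable
    (Filter.Eventually.of_forall fun x => ?_)
  rw [Real.norm_eq_abs, abs_abs]
  show |x - m| ≤ 1 + (x - m)^2
  nlinarith [sq_abs (x - m), abs_nonneg (x - m), sq_nonneg (|x - m| - 1)]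

lemma gauss_abs_sub_int_le (m : ℝ) (v : NNReal) :
    ∫ x, |x - m| ∂(gaussianReal m v) ≤ 4 * Real.sqrt v := by
  rcases eq_or_ne v 0 with rfl | hv
  · simp [gaussianReal_zero_var, integral_dirac]
  · have hvpos : (0:ℝ) < v := by positivity
    have hs : (0:ℝ) < Real.sqrt v := Real.sqrt_pos.mpr hvpos
    have hsq : Real.sqrt v ^ 2 = v := Real.sq_sqrt hvpos.le
    have hpt : ∀ x, |x - m| ≤ (Real.sqrt v + (x - m)^2 / Real.sqrt v) / 2 := by
      intro x
      set a := |x - m| with ha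
      have han : 0 ≤ a := abs_nonneg _
      have hsa : a^2 = (x - m)^2 := sq_abs _
      have h1 : a ≤ (a^2 + Real.sqrt v ^ 2) / (2 * Real.sqrt v) := by
        rw [le_div_iff₀ (by positivity)]
        nlinarith [sq_nonneg (a - Real.sqrt v)]
      have h2 : (a^2 + Real.sqrt v ^ 2) / (2 * Real.sqrt v)
          = (Real.sqrt v + a^2 / Real.sqrt v) / 2 := by
        field_simp; ring
      rw [← hsa]
      linarith [h1, h2.le, h2.ge]
    have hint2 : Integrable (fun x => (Real.sqrt v + (x - m)^2 / Real.sqrt v) / 2)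
        (gaussianReal m v) :=
      (((integrable_const _).add ((gauss_integrable_sq m v).div_const _)).div_const _)
    have hmono := integral_mono (gauss_integrable_abs_sub m v) hint2 hpt
    refine hmono.trans ?_
    rw [integral_div, integral_add (integrable_const _) ((gauss_integrable_sq m v).div_const _),
      integral_const, integral_div]
    simp only [measure_univ, probReal_univ, smul_eq_mul, one_mul]
    have h6 := gauss_sq_int_le m v
    have hkey : 6 * (v:ℝ) / Real.sqrt v = 6 * Real.sqrt v := by
      rw [eq_comm, eq_div_iff hs.ne']
      nlinarith [hsq]
    calc (Real.sqrt v + (∫ x, (x - m)^2 ∂(gaussianReal m v)) / Real.sqrt v) / 2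
        ≤ (Real.sqrt v + 6 * (v:ℝ) / Real.sqrt v) / 2 := by gcongr
      _ = (Real.sqrt v + 6 * Real.sqrt v) / 2 := by rw [hkey]
      _ ≤ 4 * Real.sqrt v := by linarith

lemma gauss_integrable_log (m : ℝ) (v : NNReal) {b : ℝ} (hb : 0 < b) :
    Integrable (fun x => Real.log (1 + b * |x|)) (gaussianReal m v) := by
  refine Integrable.mono' (g := fun x => b * (|m| + |x - m|))
    (((integrable_const _).add (gauss_integrable_abs_sub m v)).const_mul b)
    (Real.measurable_log.comp ((measurable_id.abs.const_mul b).const_add 1)).aestronglyMeasurable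
    (Filter.Eventually.of_forall fun x => ?_)
  have h0 : (0:ℝ) < 1 + b * |x| := by positivity
  have h1 : Real.log (1 + b * |x|) ≤ b * |x| := by
    linarith [Real.log_le_sub_one_of_pos h0]
  have h2 : 0 ≤ Real.log (1 + b * |x|) :=
    Real.log_nonneg (by nlinarith [abs_nonneg x])
  rw [Real.norm_eq_abs, abs_of_nonneg h2]
  show Real.log (1 + b * |x|) ≤ b * (|m| + |x - m|)
  have h3 : |x| ≤ |m| + |x - m| := by
    have := abs_sub_abs_le_abs_sub x m
    linarith [abs_nonneg (x - m)]
  nlinarith [h1, h3, mul_le_mul_of_nonneg_left h3 hb.le]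

lemma gauss_log_int_upper (v : NNReal) {m b : ℝ} (hb : 0 < b) (hm : 0 < m) :
    ∫ x, Real.log (1 + b * |x|) ∂(gaussianReal m v) ≤
      Real.log (1 + b * m) + (m + 4 * Real.sqrt v) / m := by
  have hpt : ∀ x : ℝ, Real.log (1 + b * |x|) ≤
      Real.log (1 + b * m) + (m + |x - m|) / m := by
    intro x
    have h0 : (0:ℝ) < 1 + b * |x| := by positivity
    have hxm : |x| ≤ m + |x - m| := by
      have := abs_sub_abs_le_abs_sub x m
      rw [abs_of_pos hm] at this
      linarith
    have hprod : 1 + b * |x| ≤ (1 + b * m) * (1 + (m + |x - m|) / m) := by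
      have hc : m * ((m + |x - m|) / m) = m + |x - m| := by field_simp
      nlinarith [abs_nonneg (x - m), abs_nonneg x,
        div_nonneg (by positivity : (0:ℝ) ≤ m + |x - m|) hm.le]
    calc Real.log (1 + b * |x|) ≤ Real.log ((1 + b * m) * (1 + (m + |x - m|) / m)) :=
          Real.log_le_log h0 hprod
      _ = Real.log (1 + b * m) + Real.log (1 + (m + |x - m|) / m) := by
          rw [Real.log_mul (by positivity) (by positivity)]
      _ ≤ Real.log (1 + b * m) + (m + |x - m|) / m := by
          have := Real.log_le_sub_one_of_pos
            (show (0:ℝ) < 1 + (m + |x - m|) / m by positivity)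
          linarith
  have hint2 : Integrable (fun x => Real.log (1 + b * m) + (m + |x - m|) / m)
      (gaussianReal m v) :=
    (integrable_const _).add (((integrable_const _).add
      (gauss_integrable_abs_sub m v)).div_const _)
  have hI3 : Integrable (fun a : ℝ => m + |a - m|) (gaussianReal m v) :=
    (integrable_const _).add (gauss_integrable_abs_sub m v)
  have hI2 : Integrable (fun a : ℝ => (m + |a - m|) / m) (gaussianReal m v) :=
    hI3.div_const _
  have hmono := integral_mono (gauss_integrable_log m v hb) hint2 hpt
  refine hmono.trans ?_
  rw [integral_add (integrable_const _) hI2, integral_const, integral_div,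
    integral_add (integrable_const _) (gauss_integrable_abs_sub m v), integral_const]
  simp only [measure_univ, probReal_univ, smul_eq_mul, one_mul]
  gcongr
  exact gauss_abs_sub_int_le m v

lemma gauss_log_int_lower (v : NNReal) {m b : ℝ} (hb : 0 < b) (hm : 0 < m) :
    (1 - 24 * v / m^2) * Real.log (1 + b * (m/2)) ≤
      ∫ x, Real.log (1 + b * |x|) ∂(gaussianReal m v) := by
  set γ := gaussianReal m v
  set S : Set ℝ := {x | |x - m| < m/2} with hS
  have hSmeas : MeasurableSet S := measurableSet_lt (measurable_id.sub_const m).abs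
    measurable_const
  have hf_nonneg : ∀ x : ℝ, 0 ≤ Real.log (1 + b * |x|) := fun x =>
    Real.log_nonneg (by nlinarith [abs_nonneg x])
  have hint := gauss_integrable_log m v hb
  have h1 : ∫ x in S, Real.log (1 + b * |x|) ∂γ ≤ ∫ x, Real.log (1 + b * |x|) ∂γ :=
    setIntegral_le_integral hint (Filter.Eventually.of_forall hf_nonneg)
  have h2 : ∀ x ∈ S, Real.log (1 + b * (m/2)) ≤ Real.log (1 + b * |x|) := by
    intro x hx
    simp only [hS, Set.mem_setOf_eq] at hx
    have hxabs : m/2 ≤ |x| := by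
      have := abs_sub_abs_le_abs_sub m x
      rw [abs_of_pos hm, abs_sub_comm] at this
      linarith
    apply Real.log_le_log (by positivity)
    nlinarith
  have h3 : (γ S).toReal * Real.log (1 + b * (m/2)) ≤
      ∫ x in S, Real.log (1 + b * |x|) ∂γ := by
    have := setIntegral_mono_on (integrable_const (Real.log (1 + b * (m/2)))).integrableOn
      hint.integrableOn hSmeas h2
    rwa [setIntegral_const, smul_eq_mul] at this
  have hcompl : Sᶜ = {x : ℝ | m/2 ≤ |x - m|} := by
    ext x; simp [hS, not_lt]
  have hmark : (γ Sᶜ).toReal ≤ 24 * v / m^2 := by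
    rw [hcompl]
    have := gauss_markov m v (t := m/2) (by positivity)
    refine this.trans ?_
    rw [div_le_div_iff₀ (by positivity) (by positivity)]
    ring_nf
    nlinarith [NNReal.coe_nonneg v, sq_nonneg m]
  have hsum : (γ S).toReal + (γ Sᶜ).toReal = 1 := by
    have := measure_add_measure_compl (μ := γ) hSmeas
    rw [measure_univ] at this
    have := congrArg ENNReal.toReal this
    rwa [ENNReal.toReal_add (measure_ne_top _ _) (measure_ne_top _ _), ENNReal.toReal_one]
      at this
  have hlog_nonneg : 0 ≤ Real.log (1 + b * (m/2)) := Real.log_nonneg (by nlinarith)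
  have hGS : 1 - 24 * v / m^2 ≤ (γ S).toReal := by linarith
  calc (1 - 24 * v / m^2) * Real.log (1 + b * (m/2))
      ≤ (γ S).toReal * Real.log (1 + b * (m/2)) :=
        mul_le_mul_of_nonneg_right hGS hlog_nonneg
    _ ≤ ∫ x in S, Real.log (1 + b * |x|) ∂γ := h3
    _ ≤ _ := h1

lemma ratio_add_tendsto {φ u w : ℕ → ℝ} (hφ : Tendsto φ atTop atTop) {U W : ℝ}
    (hu : Tendsto u atTop (nhds U)) (hw : Tendsto w atTop (nhds W)) :
    Tendsto (fun n => (φ n + u n) / (φ n + w n)) atTop (nhds 1) := by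
  have hφne : ∀ᶠ n in atTop, φ n ≠ 0 :=
    (hφ.eventually_ge_atTop 1).mono fun n hn => by linarith
  have h1 : Tendsto (fun n => (φ n + u n) / φ n) atTop (nhds 1) := by
    have hdiv : Tendsto (fun n => u n / φ n) atTop (nhds 0) := hu.div_atTop hφ
    have : Tendsto (fun n => 1 + u n / φ n) atTop (nhds 1) := by
      simpa using (tendsto_const_nhds (x := (1:ℝ))).add hdiv
    refine this.congr' (hφne.mono fun n hn => ?_)
    field_simp
  have h2 : Tendsto (fun n => (φ n + w n) / φ n) atTop (nhds 1) := by
    have hdiv : Tendsto (fun n => w n / φ n) atTop (nhds 0) := hw.div_atTop hφ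
    have : Tendsto (fun n => 1 + w n / φ n) atTop (nhds 1) := by
      simpa using (tendsto_const_nhds (x := (1:ℝ))).add hdiv
    refine this.congr' (hφne.mono fun n hn => ?_)
    field_simp
  have h3 := h1.div h2 one_ne_zero
  rw [div_one] at h3
  refine h3.congr' (hφne.mono fun n hn => ?_)
  simp only [Pi.div_apply]
  rw [div_div_div_cancel_right₀ hn]

lemma log_ratio_tendsto {b r : ℝ} (hb : 0 < b) (hr : 0 < r) {a s : ℕ → ℝ}
    (ha : Tendsto a atTop atTop) (hs : Tendsto (fun n => s n / a n) atTop (nhds r)) :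
    Tendsto (fun n => Real.log (1 + b * s n) / Real.log (1 + b * a n)) atTop (nhds 1) := by
  have hstop : Tendsto s atTop atTop := by
    refine ((hs.pos_mul_atTop hr ha).congr' ?_)
    filter_upwards [ha.eventually_ge_atTop 1] with n hn
    field_simp
  have hloga : Tendsto (fun n => Real.log (a n)) atTop atTop :=
    Real.tendsto_log_atTop.comp ha
  have hu : Tendsto (fun n => Real.log ((1 + b * s n) / a n)) atTop (nhds (Real.log (b*r))) := by
    have hq : Tendsto (fun n => (1 + b * s n) / a n) atTop (nhds (b*r)) := by
      have h1 : Tendsto (fun n => 1 / a n) atTop (nhds 0) := tendsto_const_nhds.div_atTop ha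
      have h2 : Tendsto (fun n => b * (s n / a n)) atTop (nhds (b * r)) :=
        tendsto_const_nhds.mul hs
      have := h1.add h2
      rw [zero_add] at this
      refine this.congr fun n => ?_
      ring
    exact hq.log (by positivity)
  have hw : Tendsto (fun n => Real.log ((1 + b * a n) / a n)) atTop (nhds (Real.log b)) := by
    have hq : Tendsto (fun n => (1 + b * a n) / a n) atTop (nhds b) := by
      have h1 : Tendsto (fun n => 1 / a n) atTop (nhds 0) := tendsto_const_nhds.div_atTop ha
      have := h1.add (tendsto_const_nhds (x := b))
      rw [zero_add] at this
      refine this.congr' ?_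
      filter_upwards [ha.eventually_ge_atTop 1] with n hn
      field_simp
    exact hq.log (by positivity)
  have hmain := ratio_add_tendsto hloga hu hw
  refine hmain.congr' ?_
  filter_upwards [ha.eventually_ge_atTop 1, hstop.eventually_ge_atTop 1] with n hna hns
  have hapos : (0:ℝ) < a n := by linarith
  have h1s : (0:ℝ) < 1 + b * s n := by nlinarith
  have h1a : (0:ℝ) < 1 + b * a n := by nlinarith
  rw [Real.log_div h1s.ne' hapos.ne', Real.log_div h1a.ne' hapos.ne']
  ring_nf

lemma key_tendsto {b c : ℝ} (hb : 0 < b) (hc : 0 < c) (μ : ℕ → ℝ) (v : ℕ → NNReal)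
    (hμ : Tendsto (fun N : ℕ => μ N / (c * Real.log N)) atTop (nhds 1))
    (hv : Tendsto (fun N : ℕ => (v N : ℝ) / μ N ^ 2) atTop (nhds 0)) :
    Tendsto (fun N : ℕ => (∫ x, Real.log (1 + b * |x|) ∂(gaussianReal (μ N) (v N))) /
      Real.log (1 + b * (c * Real.log N))) atTop (nhds 1) := by
  have hclog : Tendsto (fun N : ℕ => c * Real.log N) atTop atTop := by
    apply Tendsto.const_mul_atTop hc
    exact Real.tendsto_log_atTop.comp tendsto_natCast_atTop_atTop
  have hμtop : Tendsto μ atTop atTop := by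
    refine (hμ.pos_mul_atTop one_pos hclog).congr' ?_
    filter_upwards [hclog.eventually_ge_atTop 1] with N hN
    have hlogN : Real.log N ≠ 0 := fun h0 => by rw [h0, mul_zero] at hN; linarith
    field_simp
  have hT : Tendsto (fun N : ℕ => Real.log (1 + b * (c * Real.log N))) atTop atTop := by
    apply Real.tendsto_log_atTop.comp
    apply Filter.tendsto_atTop_add_const_left
    exact hclog.const_mul_atTop hb
  -- √v / μ → 0
  have hsv : Tendsto (fun N => Real.sqrt (v N) / μ N) atTop (nhds 0) := by
    have h0 : Tendsto (fun N => Real.sqrt ((v N : ℝ) / μ N ^ 2)) atTop (nhds 0) := by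
      have := hv.sqrt
      rwa [Real.sqrt_zero] at this
    refine h0.congr' ?_
    filter_upwards [hμtop.eventually_ge_atTop 1] with N hN
    rw [Real.sqrt_div (NNReal.coe_nonneg _), Real.sqrt_sq_eq_abs, abs_of_pos (by linarith)]
  -- upper ratio
  have hup : Tendsto (fun N => (Real.log (1 + b * μ N) + (μ N + 4 * Real.sqrt (v N)) / μ N) /
      Real.log (1 + b * (c * Real.log N))) atTop (nhds 1) := by
    have hlr : Tendsto (fun N => Real.log (1 + b * μ N) /
        Real.log (1 + b * (c * Real.log N))) atTop (nhds 1) :=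
      log_ratio_tendsto hb one_pos hclog hμ
    have hg : Tendsto (fun N => (μ N + 4 * Real.sqrt (v N)) / μ N) atTop (nhds 1) := by
      have h1 : Tendsto (fun N => 1 + 4 * (Real.sqrt (v N) / μ N)) atTop (nhds 1) := by
        have := (tendsto_const_nhds (x := (1:ℝ))).add
          ((tendsto_const_nhds (x := (4:ℝ))).mul hsv)
        simpa using this
      refine h1.congr' ?_
      filter_upwards [hμtop.eventually_ge_atTop 1] with N hN
      have hne : μ N ≠ 0 := by linarith
      rw [add_div, div_self hne, mul_div_assoc]
    have hg0 : Tendsto (fun N => ((μ N + 4 * Real.sqrt (v N)) / μ N) /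
        Real.log (1 + b * (c * Real.log N))) atTop (nhds 0) := hg.div_atTop hT
    have := hlr.add hg0
    rw [add_zero] at this
    refine this.congr fun N => ?_
    ring
  -- lower ratio
  have hlow : Tendsto (fun N => ((1 - 24 * (v N : ℝ) / μ N ^ 2) *
      Real.log (1 + b * (μ N / 2))) / Real.log (1 + b * (c * Real.log N))) atTop (nhds 1) := by
    have hf1 : Tendsto (fun N => 1 - 24 * (v N : ℝ) / μ N ^ 2) atTop (nhds 1) := by
      have := (tendsto_const_nhds (x := (1:ℝ))).sub
        ((tendsto_const_nhds (x := (24:ℝ))).mul hv)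
      simp only [mul_zero, sub_zero] at this
      refine this.congr fun N => ?_
      ring
    have hf2 : Tendsto (fun N => Real.log (1 + b * (μ N / 2)) /
        Real.log (1 + b * (c * Real.log N))) atTop (nhds 1) := by
      refine log_ratio_tendsto hb (r := 1/2) (by norm_num) hclog ?_
      have := hμ.mul (tendsto_const_nhds (x := (1:ℝ)/2))
      rw [one_mul] at this
      refine this.congr fun N => ?_
      ring
    have := hf1.mul hf2
    rw [one_mul] at this
    refine this.congr fun N => ?_
    ring
  -- squeeze
  have hev : ∀ᶠ N in atTop, 0 < μ N := hμtop.eventually_gt_atTop 0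
  have hevT : ∀ᶠ N : ℕ in atTop, 0 < Real.log (1 + b * (c * Real.log (N:ℝ))) :=
    hT.eventually_gt_atTop 0
  refine tendsto_of_tendsto_of_tendsto_of_le_of_le' hlow hup ?_ ?_
  · filter_upwards [hev, hevT] with N hm hTpos
    exact div_le_div_of_nonneg_right (gauss_log_int_lower (v N) hb hm) hTpos.le
  · filter_upwards [hev, hevT] with N hm hTpos
    exact div_le_div_of_nonneg_right (gauss_log_int_upper (v N) hb hm) hTpos.le

lemma sum_ratio_tendsto {K : ℕ} (hK : 1 ≤ K) (J T : Fin K → ℕ → ℝ)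
    (h : ∀ k, Tendsto (fun N => J k N / T k N) atTop (nhds 1))
    (hT : ∀ k, ∀ᶠ N in atTop, 0 < T k N) :
    Tendsto (fun N => (∑ k, J k N) / (∑ k, T k N)) atTop (nhds 1) := by
  have hzero : Tendsto (fun N => ∑ k : Fin K, |J k N / T k N - 1|) atTop (nhds 0) := by
    have : ∀ k : Fin K, Tendsto (fun N => |J k N / T k N - 1|) atTop (nhds 0) := by
      intro k
      have := ((h k).sub (tendsto_const_nhds (x := (1:ℝ)))).abs
      simpa using this
    have := tendsto_finset_sum Finset.univ (fun k _ => this k)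
    simpa using this
  have hTall : ∀ᶠ N in atTop, ∀ k, 0 < T k N := eventually_all.mpr hT
  have hne : Nonempty (Fin K) := ⟨⟨0, hK⟩⟩
  have hsq : Tendsto (fun N => (∑ k, J k N) / (∑ k, T k N) - 1) atTop (nhds 0) := by
    refine squeeze_zero_norm' ?_ hzero
    filter_upwards [hTall] with N hpos
    have hSpos : 0 < ∑ k, T k N := Finset.sum_pos (fun k _ => hpos k) Finset.univ_nonempty
    rw [Real.norm_eq_abs]
    have e1 : (∑ k, J k N) / (∑ k, T k N) - 1 = (∑ k, (J k N - T k N)) / (∑ k, T k N) := by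
      rw [Finset.sum_sub_distrib, sub_div, div_self hSpos.ne']
    rw [e1, abs_div, abs_of_pos hSpos]
    calc |∑ k, (J k N - T k N)| / (∑ k, T k N)
        ≤ (∑ k, |J k N - T k N|) / (∑ k, T k N) := by
          gcongr
          exact Finset.abs_sum_le_sum_abs _ _
      _ = ∑ k, |J k N - T k N| / (∑ k, T k N) := Finset.sum_div _ _ _
      _ ≤ ∑ k, |J k N - T k N| / T k N := by
          refine Finset.sum_le_sum fun k _ => ?_
          exact div_le_div_of_nonneg_left (abs_nonneg _) (hpos k)
            (Finset.single_le_sum (fun j _ => (hpos j).le) (Finset.mem_univ k))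
      _ = ∑ k, |J k N / T k N - 1| := by
          refine Finset.sum_congr rfl fun k _ => ?_
          rw [show J k N / T k N - 1 = (J k N - T k N) / T k N by
            rw [sub_div, div_self (hpos k).ne'], abs_div, abs_of_pos (hpos k)]
  have := hsq.add (tendsto_const_nhds (x := (1:ℝ)))
  simp only [zero_add] at this
  refine this.congr fun N => ?_
  ring

theorem stmt18
    (K L : ℕ) (hK : 1 ≤ K) (hL : 1 ≤ L)
    (ρ : ℝ) (hρ : 0 < ρ)
    (β m : Fin K → ℝ) (hβ : ∀ k, 0 < β k) (hm : ∀ k, 0 < m k)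
    (μ : Fin K → ℕ → ℝ) (v : Fin K → ℕ → NNReal)
    (hμ : ∀ k, Tendsto (fun N : ℕ => μ k N / (((L : ℝ) / m k) * Real.log N))
      atTop (nhds 1))
    (hv : ∀ k, Tendsto (fun N : ℕ => (v k N : ℝ) / μ k N ^ 2) atTop (nhds 0)) :
    Tendsto
      (fun N : ℕ =>
        (∑ k : Fin K,
          ∫ x, Real.logb 2 (1 + ρ * β k * |x|) ∂(gaussianReal (μ k N) (v k N))) /
          ∑ k : Fin K,
            Real.logb 2 (1 + ρ * β k * ((L : ℝ) / m k) * Real.log N))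
      atTop (nhds 1) := by
  set J : Fin K → ℕ → ℝ := fun k N =>
    ∫ x, Real.log (1 + ρ * β k * |x|) ∂(gaussianReal (μ k N) (v k N)) with hJ
  set T : Fin K → ℕ → ℝ := fun k N =>
    Real.log (1 + ρ * β k * ((L : ℝ) / m k) * Real.log N) with hT
  have hc : ∀ k : Fin K, (0:ℝ) < (L : ℝ) / m k := fun k => by
    have hL' : (0:ℝ) < (L:ℝ) := by exact_mod_cast Nat.lt_of_lt_of_le Nat.zero_lt_one hL
    exact div_pos hL' (hm k)
  have hb : ∀ k : Fin K, 0 < ρ * β k := fun k => mul_pos hρ (hβ k)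
  have hkey : ∀ k : Fin K, Tendsto (fun N => J k N / T k N) atTop (nhds 1) := by
    intro k
    have := key_tendsto (hb k) (hc k) (μ k) (v k) (hμ k) (hv k)
    refine this.congr fun N => ?_
    rw [hJ, hT]
    simp only []
    rw [show 1 + ρ * β k * ((L:ℝ) / m k * Real.log N)
      = 1 + ρ * β k * ((L:ℝ) / m k) * Real.log N by ring]
  have hTpos : ∀ k : Fin K, ∀ᶠ N in atTop, 0 < T k N := by
    intro k
    filter_upwards [eventually_ge_atTop 2] with N hN
    have hN' : (2:ℝ) ≤ (N:ℝ) := by exact_mod_cast hN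
    have hlogN : 0 < Real.log N := Real.log_pos (by linarith)
    rw [hT]
    simp only []
    apply Real.log_pos
    have := mul_pos (mul_pos (hb k) (hc k)) hlogN
    nlinarith
  have hmain := sum_ratio_tendsto hK J T hkey hTpos
  have hlog2 : Real.log 2 ≠ 0 := by
    have := Real.log_pos (by norm_num : (1:ℝ) < 2)
    linarith
  refine hmain.congr fun N => ?_
  have e1 : ∀ k : Fin K, (∫ x, Real.logb 2 (1 + ρ * β k * |x|)
      ∂(gaussianReal (μ k N) (v k N))) = J k N / Real.log 2 := by
    intro k
    rw [hJ]
    simp only [Real.logb, integral_div]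
  have e2 : ∀ k : Fin K, Real.logb 2 (1 + ρ * β k * ((L : ℝ) / m k) * Real.log N)
      = T k N / Real.log 2 := fun k => rfl
  simp only [e1, e2, ← Finset.sum_div]
  rw [div_div_div_cancel_right₀ hlog2]
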